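/- Assume the groups are sorted so that ρ_1 < ρ_2 < ⋯ < ρ_M. If the index m satisfies f¹_m ≤ 0, then every optimal pushing strategy c* has c*_m = 0. -/

import Mathlib

open Filter Set Topology Finset

lemma aux_max_left {f : ℝ → ℝ} {d x₀ : ℝ} (hd : HasDerivAt f d x₀)
    (hmax : ∀ y ∈ Set.Icc (0:ℝ) 1, f y ≤ f x₀) (h0 : 0 < x₀) (h1 : x₀ ≤ 1) : 0 ≤ d := by
  by_contra hneg
  push_neg at hneg
  have hs := hasDerivAt_iff_tendsto_slope.1 hd
  have hlt : Tendsto (slope f x₀) (𝓝[<] x₀) (𝓝 d) :=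
    hs.mono_left (nhdsWithin_mono _ (fun y hy => ne_of_lt hy))
  have hev : ∀ᶠ y in 𝓝[<] x₀, slope f x₀ y < 0 :=
    hlt.eventually (eventually_lt_nhds hneg)
  have hmem : Set.Ioo (max 0 (x₀ - 1)) x₀ ∈ 𝓝[<] x₀ :=
    Ioo_mem_nhdsLT (by simp [h0, sub_lt_self _ one_pos])
  have : ∀ᶠ y in 𝓝[<] x₀, False := by
    filter_upwards [hev, eventually_of_mem hmem (fun y hy => hy)] with y hy1 hy2
    have hy0 : (0:ℝ) ≤ y := le_of_lt (lt_of_le_of_lt (le_max_left _ _) hy2.1)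
    have hy1' : y ≤ 1 := le_trans hy2.2.le h1
    have hle := hmax y ⟨hy0, hy1'⟩
    rw [slope_def_field] at hy1
    have hden : y - x₀ < 0 := by linarith [hy2.2]
    rcases div_neg_iff.mp hy1 with ⟨h, h'⟩ | ⟨h, h'⟩ <;> linarith
  exact (this.exists.elim fun _ h => h)

lemma aux_max_right {f : ℝ → ℝ} {d x₀ : ℝ} (hd : HasDerivAt f d x₀)
    (hmax : ∀ y ∈ Set.Icc (0:ℝ) 1, f y ≤ f x₀) (h0 : 0 ≤ x₀) (h1 : x₀ < 1) : d ≤ 0 := by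
  by_contra hpos
  push_neg at hpos
  have hs := hasDerivAt_iff_tendsto_slope.1 hd
  have hlt : Tendsto (slope f x₀) (𝓝[>] x₀) (𝓝 d) :=
    hs.mono_left (nhdsWithin_mono _ (fun y hy => ne_of_gt hy))
  have hev : ∀ᶠ y in 𝓝[>] x₀, 0 < slope f x₀ y :=
    hlt.eventually (eventually_gt_nhds hpos)
  have hmem : Set.Ioo x₀ (min 1 (x₀ + 1)) ∈ 𝓝[>] x₀ :=
    Ioo_mem_nhdsGT (by simp [h1, lt_add_of_pos_right _ one_pos])
  have : ∀ᶠ y in 𝓝[>] x₀, False := by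
    filter_upwards [hev, eventually_of_mem hmem (fun y hy => hy)] with y hy1 hy2
    have hy0 : (0:ℝ) ≤ y := le_trans h0 hy2.1.le
    have hy1' : y ≤ 1 := le_of_lt (lt_of_lt_of_le hy2.2 (min_le_left _ _))
    have hle := hmax y ⟨hy0, hy1'⟩
    rw [slope_def_field] at hy1
    have hden : 0 < y - x₀ := by linarith [hy2.1]
    rcases div_pos_iff.mp hy1 with ⟨h, h'⟩ | ⟨h, h'⟩ <;> linarith
  exact (this.exists.elim fun _ h => h)

lemma aux_deriv (A u v T₀ x : ℝ) :
    HasDerivAt (fun y => (A + u * (1 - y)) * (1 - Real.exp (-(T₀ + v * y))))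
      (-u * (1 - Real.exp (-(T₀ + v * x))) +
        (A + u * (1 - x)) * (v * Real.exp (-(T₀ + v * x)))) x := by
  have h1 : HasDerivAt (fun y : ℝ => A + u * (1 - y)) (-u) x := by
    simpa using (((hasDerivAt_id x).const_sub 1).const_mul u).const_add A
  have h2 : HasDerivAt (fun y : ℝ => -(T₀ + v * y)) (-v) x := by
    have := (((hasDerivAt_id x).const_mul v).const_add T₀).neg
    simp only [id, mul_one] at this
    exact this
  have h3 : HasDerivAt (fun y : ℝ => 1 - Real.exp (-(T₀ + v * y)))
      (v * Real.exp (-(T₀ + v * x))) x := by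
    have := (Real.hasDerivAt_exp (-(T₀ + v * x))).comp x h2
    simpa [mul_comm] using (this.const_sub 1)
  exact h1.mul h3

lemma aux_sum_update {M : ℕ} (c : Fin M → ℝ) (f : Fin M → ℝ → ℝ) (j : Fin M) (x : ℝ) :
    ∑ i, f i (Function.update c j x i) = (∑ i ∈ univ.erase j, f i (c i)) + f j x := by
  rw [← Finset.sum_erase_add _ _ (mem_univ j)]
  simp only [Function.update_self]
  congr 1
  exact Finset.sum_congr rfl fun i hi => by
    rw [Function.update_of_ne (Finset.ne_of_mem_erase hi)]

lemma aux_split {M : ℕ} (m : Fin M) (f : Fin M → ℝ) :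
    ∑ i, f i = ∑ i ∈ Finset.Iic m, f i + ∑ i ∈ Finset.Ioi m, f i := by
  rw [← Finset.sum_union (by
    simp only [Finset.disjoint_left, Finset.mem_Iic, Finset.mem_Ioi]
    intro a ha; exact not_lt.mpr ha)]
  congr 1
  ext x
  simp [Finset.mem_Iic, Finset.mem_Ioi, le_or_gt]

theorem stmt_7 (M : ℕ) (hM : 1 ≤ M) (B : ℝ) (hB : 0 < B)
    (t ρ : Fin M → ℝ) (ht : ∀ i, 0 < t i) (hρ : ∀ i, 0 < ρ i ∧ ρ i ≤ 1)
    (hsort : StrictMono ρ) (m : Fin M)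
    (hf1 : 1 + B * ρ m * (∑ i ∈ Finset.Iic m, t i) -
      Real.exp (B * ∑ j ∈ Finset.Ioi m, t j * ρ j) ≤ 0)
    (c : Fin M → ℝ) (hc : ∀ i, 0 ≤ c i ∧ c i ≤ 1)
    (hopt : ∀ d : Fin M → ℝ, (∀ i, 0 ≤ d i ∧ d i ≤ 1) →
      (∑ i, t i * (1 - d i)) * (1 - Real.exp (-B * ∑ k, t k * ρ k * d k)) ≤
      (∑ i, t i * (1 - c i)) * (1 - Real.exp (-B * ∑ k, t k * ρ k * c k))) :
    c m = 0 := by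
  by_contra hne
  have hcm : 0 < c m := lt_of_le_of_ne (hc m).1 (Ne.symm hne)
  set S := ∑ i, t i * (1 - c i) with hSdef
  set T := ∑ k, t k * ρ k * c k with hTdef
  set E := Real.exp (-B * T) with hEdef
  have hEpos : 0 < E := Real.exp_pos _
  -- S > 0
  have hSnn : ∀ i, (0:ℝ) ≤ t i * (1 - c i) :=
    fun i => mul_nonneg (ht i).le (by linarith [(hc i).2])
  have hSpos : 0 < S := by
    rcases lt_or_eq_of_le (Finset.sum_nonneg fun i _ => hSnn i) with h | h
    · exact h
    · exfalso
      have hd := hopt (fun _ => 1/2) (fun i => by norm_num)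
      have h1 : (0:ℝ) < ∑ i : Fin M, t i * (1 - 1/2) :=
        Finset.sum_pos (fun i _ => by nlinarith [ht i]) ⟨m, Finset.mem_univ m⟩
      have h2 : (0:ℝ) < ∑ k : Fin M, t k * ρ k * (1/2) :=
        Finset.sum_pos (fun k _ => by nlinarith [ht k, (hρ k).1]) ⟨m, Finset.mem_univ m⟩
      have h3 : Real.exp (-B * ∑ k : Fin M, t k * ρ k * (1/2)) < 1 := by
        apply Real.exp_lt_one_iff.mpr
        nlinarith
      have h4 : 0 < (∑ i : Fin M, t i * (1 - 1/2)) *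
          (1 - Real.exp (-B * ∑ k : Fin M, t k * ρ k * (1/2))) :=
        mul_pos h1 (by linarith)
      have hzero : S = 0 := hSdef.trans h.symm
      rw [hzero, zero_mul] at hd
      linarith
  -- per-coordinate data
  set A : Fin M → ℝ := fun j => ∑ i ∈ univ.erase j, t i * (1 - c i) with hAdef
  set W : Fin M → ℝ := fun j => ∑ k ∈ univ.erase j, t k * ρ k * c k with hWdef
  have hA : ∀ j, A j + t j * (1 - c j) = S :=
    fun j => Finset.sum_erase_add _ _ (mem_univ j)
  have hW : ∀ j, W j + t j * ρ j * c j = T :=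
    fun j => Finset.sum_erase_add _ _ (mem_univ j)
  have hexp : ∀ j : Fin M, B * W j + B * t j * ρ j * c j = B * T := by
    intro j; rw [← hW j]; ring
  -- max over [0,1] in each coordinate
  have hψmax : ∀ j : Fin M, ∀ x ∈ Set.Icc (0:ℝ) 1,
      (A j + t j * (1 - x)) * (1 - Real.exp (-(B * W j + B * t j * ρ j * x))) ≤
      (A j + t j * (1 - c j)) * (1 - Real.exp (-(B * W j + B * t j * ρ j * c j))) := by
    intro j x hx
    have hfeas : ∀ i, 0 ≤ Function.update c j x i ∧ Function.update c j x i ≤ 1 := by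
      intro i
      rcases eq_or_ne i j with rfl | hne'
      · simp [hx.1, hx.2]
      · simp [Function.update_of_ne hne', hc i]
    have h := hopt _ hfeas
    have e1 : ∑ i, t i * (1 - Function.update c j x i) = A j + t j * (1 - x) :=
      aux_sum_update c (fun i v => t i * (1 - v)) j x
    have e2 : ∑ k, t k * ρ k * Function.update c j x k = W j + t j * ρ j * x :=
      aux_sum_update c (fun k v => t k * ρ k * v) j x
    rw [e1, e2] at h
    have e3 : -B * (W j + t j * ρ j * x) = -(B * W j + B * t j * ρ j * x) := by ring
    rw [e3] at h
    have e4 : (A j + t j * (1 - c j)) *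
        (1 - Real.exp (-(B * W j + B * t j * ρ j * c j))) = S * (1 - E) := by
      rw [hA j, hexp j, hEdef, neg_mul]
    rw [e4]
    exact h
  -- derivative at c j
  have hderiv : ∀ j : Fin M,
      HasDerivAt (fun y => (A j + t j * (1 - y)) *
        (1 - Real.exp (-(B * W j + B * t j * ρ j * y))))
        (-t j * (1 - E) + S * (B * t j * ρ j * E)) (c j) := by
    intro j
    have h := aux_deriv (A j) (t j) (B * t j * ρ j) (B * W j) (c j)
    have e5 : Real.exp (-(B * W j + B * t j * ρ j * c j)) = E := by
      rw [hexp j, hEdef, neg_mul]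
    rw [e5, hA j] at h
    exact h
  -- derivative sign at m
  have hm0 : 0 ≤ -t m * (1 - E) + S * (B * t m * ρ m * E) :=
    aux_max_left (hderiv m) (fun y hy => hψmax m y hy) hcm (hc m).2
  have hkey : 1 - E ≤ S * (B * ρ m * E) := by
    have htm := ht m
    nlinarith [hm0]
  -- all later coordinates are 1
  have hck1 : ∀ k, m < k → c k = 1 := by
    intro k hk
    by_contra hne1
    have hck : c k < 1 := lt_of_le_of_ne (hc k).2 hne1
    have h0 : -t k * (1 - E) + S * (B * t k * ρ k * E) ≤ 0 :=
      aux_max_right (hderiv k) (fun y hy => hψmax k y hy) (hc k).1 hck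
    have hkk : S * (B * ρ k * E) ≤ 1 - E := by nlinarith [ht k, h0]
    have hρk : ρ m < ρ k := hsort hk
    nlinarith [mul_pos (mul_pos (mul_pos hSpos hB) hEpos) (sub_pos.mpr hρk)]
  -- numeric conclusion
  have hinv : E * Real.exp (B * T) = 1 := by
    rw [hEdef, ← Real.exp_add]
    norm_num
  have hm1 : Real.exp (B * T) - 1 ≤ B * ρ m * S := by
    have h5 := mul_le_mul_of_nonneg_right hkey (Real.exp_pos (B * T)).le
    have e6 : (1 - E) * Real.exp (B * T) = Real.exp (B * T) - 1 := by
      linear_combination (-1 : ℝ) * hinv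
    have e7 : S * (B * ρ m * E) * Real.exp (B * T) = B * ρ m * S := by
      linear_combination (B * ρ m * S) * hinv
    linarith
  have hS_le : S ≤ ∑ i ∈ Finset.Iic m, t i := by
    rw [hSdef, aux_split m]
    have hz : ∑ i ∈ Finset.Ioi m, t i * (1 - c i) = 0 :=
      Finset.sum_eq_zero fun i hi => by rw [hck1 i (Finset.mem_Ioi.mp hi)]; ring
    rw [hz, add_zero]
    exact Finset.sum_le_sum fun i _ => by nlinarith [ht i, (hc i).1]
  have hT_ge : (∑ j ∈ Finset.Ioi m, t j * ρ j) + t m * ρ m * c m ≤ T := by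
    rw [hTdef, aux_split m (fun k => t k * ρ k * c k)]
    have h6 : ∑ k ∈ Finset.Ioi m, t k * ρ k * c k = ∑ j ∈ Finset.Ioi m, t j * ρ j :=
      Finset.sum_congr rfl fun k hk => by rw [hck1 k (Finset.mem_Ioi.mp hk)]; ring
    have h7 : t m * ρ m * c m ≤ ∑ k ∈ Finset.Iic m, t k * ρ k * c k :=
      Finset.single_le_sum
        (f := fun k => t k * ρ k * c k)
        (fun k _ => mul_nonneg (mul_nonneg (ht k).le (hρ k).1.le) (hc k).1)
        (Finset.mem_Iic.mpr le_rfl)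
    linarith
  have hP : Real.exp (B * ∑ j ∈ Finset.Ioi m, t j * ρ j) < Real.exp (B * T) := by
    apply Real.exp_lt_exp.mpr
    have h8 := mul_le_mul_of_nonneg_left hT_ge hB.le
    nlinarith [mul_pos (mul_pos (mul_pos hB (ht m)) (hρ m).1) hcm]
  have h9 : B * ρ m * S ≤ B * ρ m * ∑ i ∈ Finset.Iic m, t i :=
    mul_le_mul_of_nonneg_left hS_le (mul_nonneg hB.le (hρ m).1.le)
  linarith [hm1, hf1, hP, h9]
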